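/- Let M be the submonoid of the additive monoid ℚ₊ of nonnegative rational numbers generated by the set {1/2ⁱ : i ∈ ℕ, i ≥ 1} ∪ {1/3ʲ : j ∈ ℕ, j ≥ 1}, and let F be a field of characteristic 0. Then the monoid domain F[X;M] is not an AP domain, i.e., there exists an irreducible element of F[X;M] that is not prime. -/

import Mathlib

open Finsupp Polynomial

namespace NotAPaux




/-- injectivity of (x,y) ↦ x/2^a + y/3^b on the box -/
lemma rho_inj {a b x y x' y' : ℕ} (hx : x < 2^a) (hx' : x' < 2^a) (hy : y < 3^b) (hy' : y' < 3^b)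
    (h : (x:ℚ)/2^a + (y:ℚ)/3^b = (x':ℚ)/2^a + (y':ℚ)/3^b) : x = x' ∧ y = y' := by
  have h2 : (0:ℚ) < 2^a := by positivity
  have h3 : (0:ℚ) < 3^b := by positivity
  have key : (x:ℚ) * 3^b + y * 2^a = x' * 3^b + y' * 2^a := by
    field_simp at h
    linarith
  have keyZ : (x:ℤ) * 3^b + y * 2^a = x' * 3^b + y' * 2^a := by
    exact_mod_cast key
  have hdvd : (2^a : ℤ) ∣ ((x:ℤ) - x') * 3^b := by
    refine ⟨(y':ℤ) - y, ?_⟩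
    ring_nf
    linarith [keyZ]
  have hcop : Nat.Coprime (2^a) (3^b) := Nat.Coprime.pow _ _ (by norm_num)
  have hdvd2 : (2^a : ℕ) ∣ ((x:ℤ) - x').natAbs * 3^b := by
    have := Int.natAbs_dvd_natAbs.2 hdvd
    simpa [Int.natAbs_mul, Int.natAbs_pow] using this
  have hdvd3 : (2^a : ℕ) ∣ ((x:ℤ) - x').natAbs :=
    Nat.Coprime.dvd_of_dvd_mul_right hcop hdvd2
  have hxx : x = x' := by
    have hlt : ((x:ℤ) - x').natAbs < 2^a := by
      rcases le_or_gt x x' with hle | hlt'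
      · have : ((x:ℤ) - x').natAbs = x' - x := by omega
        omega
      · have : ((x:ℤ) - x').natAbs = x - x' := by omega
        omega
    have := Nat.eq_zero_of_dvd_of_lt hdvd3 hlt |>.symm
    · omega
  refine ⟨hxx, ?_⟩
  subst hxx
  have : (y:ℤ) * 2^a = y' * 2^a := by linarith [keyZ]
  have : (y:ℤ) = y' := by
    have h2a : (2^a : ℤ) ≠ 0 := by positivity
    exact mul_right_cancel₀ h2a this
  exact_mod_cast this




abbrev genSet : Set ℚ :=
  ({q : ℚ | ∃ i : ℕ, 1 ≤ i ∧ q = 1 / 2 ^ i} ∪ {q : ℚ | ∃ j : ℕ, 1 ≤ j ∧ q = 1 / 3 ^ j})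

lemma mem_nonneg {q : ℚ} (hq : q ∈ AddSubmonoid.closure genSet) : 0 ≤ q := by
  induction hq using AddSubmonoid.closure_induction with
  | mem q hq =>
    rcases hq with ⟨i, _, rfl⟩ | ⟨j, _, rfl⟩ <;> positivity
  | zero => exact le_refl 0
  | add a b _ _ ha hb => linarith

lemma rep_upgrade {q : ℚ} {a b a' b' : ℕ} (ha : a ≤ a') (hb : b ≤ b')
    (h : ∃ x y : ℕ, q = x / 2^a + y / 3^b) :
    ∃ x y : ℕ, q = x / 2^a' + y / 3^b' := by
  obtain ⟨x, y, rfl⟩ := h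
  refine ⟨x * 2^(a'-a), y * 3^(b'-b), ?_⟩
  have h2 : (2:ℚ)^a' = 2^a * 2^(a'-a) := by
    rw [← pow_add]; congr 1; omega
  have h3 : (3:ℚ)^b' = 3^b * 3^(b'-b) := by
    rw [← pow_add]; congr 1; omega
  push_cast
  rw [h2, h3]
  have p2 : (2:ℚ)^a ≠ 0 := by positivity
  have p2' : (2:ℚ)^(a'-a) ≠ 0 := by positivity
  have p3 : (3:ℚ)^b ≠ 0 := by positivity
  have p3' : (3:ℚ)^(b'-b) ≠ 0 := by positivity
  field_simp

lemma mem_rep {q : ℚ} (hq : q ∈ AddSubmonoid.closure genSet) :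
    ∃ a b : ℕ, 1 ≤ a ∧ 1 ≤ b ∧ ∃ x y : ℕ, q = x / 2^a + y / 3^b := by
  induction hq using AddSubmonoid.closure_induction with
  | mem q hq =>
    rcases hq with ⟨i, hi, rfl⟩ | ⟨j, hj, rfl⟩
    · exact ⟨i, 1, hi, le_refl 1, 1, 0, by push_cast; ring⟩
    · exact ⟨1, j, le_refl 1, hj, 0, 1, by push_cast; ring⟩
  | zero => exact ⟨1, 1, le_refl 1, le_refl 1, 0, 0, by norm_num⟩
  | add p q _ _ hp hq =>
    obtain ⟨a, b, ha, hb, hrep⟩ := hp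
    obtain ⟨a', b', ha', hb', hrep'⟩ := hq
    refine ⟨max a a', max b b', le_trans ha (le_max_left _ _), le_trans hb (le_max_left _ _), ?_⟩
    obtain ⟨x, y, rfl⟩ := rep_upgrade (le_max_left a a') (le_max_left b b') hrep
    obtain ⟨x', y', rfl⟩ := rep_upgrade (le_max_right a a') (le_max_right b b') hrep'
    exact ⟨x + x', y + y', by push_cast; ring⟩

/-- uniform denominators over a finite set -/
lemma finset_rep (S : Finset ℚ) (hS : ∀ u ∈ S, u ∈ AddSubmonoid.closure genSet) :
    ∃ a b : ℕ, 1 ≤ a ∧ 1 ≤ b ∧ ∀ u ∈ S, ∃ x y : ℕ, u = x / 2^a + y / 3^b := by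
  classical
  induction S using Finset.induction with
  | empty => exact ⟨1, 1, le_refl 1, le_refl 1, by simp⟩
  | insert u S' hnot ih =>
    obtain ⟨a, b, ha, hb, hrep⟩ := ih (fun v hv => hS v (Finset.mem_insert_of_mem hv))
    obtain ⟨a', b', ha', hb', hrep'⟩ := mem_rep (hS u (Finset.mem_insert_self u S'))
    refine ⟨max a a', max b b', le_trans ha (le_max_left _ _), le_trans hb (le_max_left _ _), ?_⟩
    intro v hv
    rcases Finset.mem_insert.1 hv with rfl | hv'
    · exact rep_upgrade (le_max_right a a') (le_max_right b b') hrep'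
    · exact rep_upgrade (le_max_left a a') (le_max_left b b') (hrep v hv')



variable {F : Type*} [Field F]

lemma mul_apply_maxmax (p q : AddMonoidAlgebra F ℚ) (hp : p.coeff.support.Nonempty)
    (hq : q.coeff.support.Nonempty) :
    (p * q).coeff (p.coeff.support.max' hp + q.coeff.support.max' hq) =
      p.coeff (p.coeff.support.max' hp) * q.coeff (q.coeff.support.max' hq) := by
  classical
  rw [AddMonoidAlgebra.mul_apply]
  rw [Finsupp.sum, Finset.sum_eq_single_of_mem (p.coeff.support.max' hp) (Finset.max'_mem _ _)]
  · rw [Finsupp.sum, Finset.sum_eq_single_of_mem (q.coeff.support.max' hq) (Finset.max'_mem _ _)]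
    · rw [if_pos rfl]
    · intro b hb hne
      rw [if_neg]
      intro hEq
      exact hne (by linarith [add_left_cancel hEq, le_refl (0:ℚ)])
  · intro a ha hne
    rw [Finsupp.sum]
    apply Finset.sum_eq_zero
    intro b hb
    rw [if_neg]
    intro hEq
    have h1 : a ≤ p.coeff.support.max' hp := Finset.le_max' _ _ ha
    have h2 : b ≤ q.coeff.support.max' hq := Finset.le_max' _ _ hb
    have : a = p.coeff.support.max' hp := by linarith
    exact hne this

lemma mul_apply_minmin (p q : AddMonoidAlgebra F ℚ) (hp : p.coeff.support.Nonempty)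
    (hq : q.coeff.support.Nonempty) :
    (p * q).coeff (p.coeff.support.min' hp + q.coeff.support.min' hq) =
      p.coeff (p.coeff.support.min' hp) * q.coeff (q.coeff.support.min' hq) := by
  classical
  rw [AddMonoidAlgebra.mul_apply]
  rw [Finsupp.sum, Finset.sum_eq_single_of_mem (p.coeff.support.min' hp) (Finset.min'_mem _ _)]
  · rw [Finsupp.sum, Finset.sum_eq_single_of_mem (q.coeff.support.min' hq) (Finset.min'_mem _ _)]
    · rw [if_pos rfl]
    · intro b hb hne
      rw [if_neg]
      intro hEq
      exact hne (add_left_cancel hEq)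
  · intro a ha hne
    rw [Finsupp.sum]
    apply Finset.sum_eq_zero
    intro b hb
    rw [if_neg]
    intro hEq
    have h1 : p.coeff.support.min' hp ≤ a := Finset.min'_le _ _ ha
    have h2 : q.coeff.support.min' hq ≤ b := Finset.min'_le _ _ hb
    have : a = p.coeff.support.min' hp := by linarith
    exact hne this

lemma max'_add_mem (p q : AddMonoidAlgebra F ℚ) (hp : p.coeff.support.Nonempty)
    (hq : q.coeff.support.Nonempty) :
    p.coeff.support.max' hp + q.coeff.support.max' hq ∈ (p * q).coeff.support := by
  rw [Finsupp.mem_support_iff, mul_apply_maxmax p q hp hq]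
  exact mul_ne_zero (Finsupp.mem_support_iff.1 (Finset.max'_mem _ _))
    (Finsupp.mem_support_iff.1 (Finset.max'_mem _ _))

lemma min'_add_mem (p q : AddMonoidAlgebra F ℚ) (hp : p.coeff.support.Nonempty)
    (hq : q.coeff.support.Nonempty) :
    p.coeff.support.min' hp + q.coeff.support.min' hq ∈ (p * q).coeff.support := by
  rw [Finsupp.mem_support_iff, mul_apply_minmin p q hp hq]
  exact mul_ne_zero (Finsupp.mem_support_iff.1 (Finset.min'_mem _ _))
    (Finsupp.mem_support_iff.1 (Finset.min'_mem _ _))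



variable {F : Type*} [Field F]

/-- the monoid hom (x,y) ↦ s^x t^y into F[s][t], s = C X, t = X -/
noncomputable def mhom (F : Type*) [Field F] :
    Multiplicative (ℕ × ℕ) →* Polynomial (Polynomial F) where
  toFun z := (C X) ^ (Multiplicative.toAdd z).1 * X ^ (Multiplicative.toAdd z).2
  map_one' := by simp
  map_mul' z w := by
    simp only [toAdd_mul, Prod.fst_add, Prod.snd_add, pow_add]
    ring

noncomputable def Theta (F : Type*) [Field F] :
    AddMonoidAlgebra F (ℕ × ℕ) →ₐ[F] Polynomial (Polynomial F) :=
  AddMonoidAlgebra.lift F _ (ℕ × ℕ) (mhom F)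

lemma Theta_single (z : ℕ × ℕ) (c : F) :
    Theta F (AddMonoidAlgebra.single z c) = c • ((C X : Polynomial (Polynomial F)) ^ z.1 * X ^ z.2) := by
  rw [Theta, AddMonoidAlgebra.lift_single]
  rfl

lemma Theta_coeff (P : AddMonoidAlgebra F (ℕ × ℕ)) (x y : ℕ) :
    ((Theta F P).coeff y).coeff x = P.coeff (x, y) := by
  induction P using AddMonoidAlgebra.induction_linear with
  | zero => simp
  | add P Q hP hQ => simp [map_add, hP, hQ, AddMonoidAlgebra.coeff_add, Finsupp.add_apply]
  | single z c =>
    rw [Theta_single, ← C_pow, AddMonoidAlgebra.coeff_single, Finsupp.single_apply]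
    simp only [Polynomial.coeff_smul, Polynomial.coeff_C_mul, coeff_X_pow, smul_eq_mul]
    by_cases hy : y = z.2
    · rw [if_pos hy, mul_one, coeff_X_pow]
      by_cases hx : x = z.1
      · rw [if_pos hx, if_pos (by rw [Prod.ext_iff]; exact ⟨hx.symm, hy.symm⟩), mul_one]
      · rw [if_neg hx, if_neg (by rw [Prod.ext_iff]; rintro ⟨h1, -⟩; exact hx h1.symm), mul_zero]
    · rw [if_neg hy, mul_zero, Polynomial.coeff_zero, mul_zero,
        if_neg (by rw [Prod.ext_iff]; rintro ⟨-, h2⟩; exact hy h2.symm)]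

lemma Theta_injective : Function.Injective (Theta F) := by
  intro P Q h
  ext z
  have := Theta_coeff (F := F) P z.1 z.2
  rw [h, Theta_coeff] at this
  exact this.symm



variable {F : Type*} [Field F]

lemma no_cube_root (k : ℕ) (hk3 : ¬ (3:ℕ) ∣ k)
    (t : FractionRing (Polynomial F)) :
    t ^ 3 ≠ algebraMap (Polynomial F) (FractionRing (Polynomial F)) (-(X ^ k)) := by
  intro ht
  obtain ⟨⟨n, d⟩, hnd⟩ := IsLocalization.surj (nonZeroDivisors (Polynomial F)) t
  have hd0 : (d : Polynomial F) ≠ 0 := nonZeroDivisors.coe_ne_zero d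
  have key : n ^ 3 = -(X ^ k) * (d : Polynomial F) ^ 3 := by
    apply IsFractionRing.injective (Polynomial F) (FractionRing (Polynomial F))
    rw [map_mul, map_pow, map_pow, ← hnd, ← ht]
    ring
  have key2 : (-n) ^ 3 = X ^ k * (d : Polynomial F) ^ 3 := by
    rw [Odd.neg_pow (by decide), key]; ring
  have hXk : (X : Polynomial F) ^ k ≠ 0 := pow_ne_zero _ X_ne_zero
  have hd3 : (d : Polynomial F) ^ 3 ≠ 0 := pow_ne_zero _ hd0
  have hN : (-n : Polynomial F) ≠ 0 := by
    intro h
    rw [h, zero_pow (by norm_num)] at key2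
    exact mul_ne_zero hXk hd3 key2.symm
  have e1 : ((-n : Polynomial F) ^ 3).natTrailingDegree = 3 * (-n : Polynomial F).natTrailingDegree := by
    have : (-n : Polynomial F) ^ 3 = (-n) * (-n) * (-n) := by ring
    rw [this, natTrailingDegree_mul (mul_ne_zero hN hN) hN, natTrailingDegree_mul hN hN]
    ring
  have e2 : ((d : Polynomial F) ^ 3).natTrailingDegree = 3 * (d : Polynomial F).natTrailingDegree := by
    have : (d : Polynomial F) ^ 3 = d * d * d := by ring
    rw [this, natTrailingDegree_mul (mul_ne_zero hd0 hd0) hd0, natTrailingDegree_mul hd0 hd0]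
    ring
  have e3 : ((X : Polynomial F) ^ k * (d : Polynomial F) ^ 3).natTrailingDegree = k + 3 * (d : Polynomial F).natTrailingDegree := by
    rw [natTrailingDegree_mul hXk hd3, natTrailingDegree_X_pow, e2]
  have := congrArg Polynomial.natTrailingDegree key2
  rw [e1, e3] at this
  omega

lemma irred_key (a b : ℕ) (ha : 1 ≤ a) (hb : 1 ≤ b) :
    Irreducible ((X : Polynomial (Polynomial F)) ^ (3 ^ (b - 1))
      + C ((X : Polynomial F) ^ (2 ^ (a - 1)))) := by
  have hk3 : ¬ (3:ℕ) ∣ 2 ^ (a - 1) := by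
    intro h
    have := Nat.Prime.dvd_of_dvd_pow (p := 3) (by norm_num) h
    norm_num at this
  have heq : (X : Polynomial (Polynomial F)) ^ (3 ^ (b - 1)) + C ((X : Polynomial F) ^ (2 ^ (a - 1)))
      = X ^ (3 ^ (b - 1)) - C (-((X : Polynomial F) ^ (2 ^ (a - 1)))) := by
    rw [map_neg, sub_neg_eq_add]
  rw [heq]
  have hmono : ((X : Polynomial (Polynomial F)) ^ (3 ^ (b - 1))
      - C (-((X : Polynomial F) ^ (2 ^ (a - 1))))).Monic :=
    monic_X_pow_sub_C _ (by positivity)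
  rw [hmono.irreducible_iff_irreducible_map_fraction_map (K := FractionRing (Polynomial F))]
  rw [Polynomial.map_sub, Polynomial.map_pow, Polynomial.map_X, Polynomial.map_C]
  apply X_pow_sub_C_irreducible_of_odd (Odd.pow (by decide : Odd 3))
  intro p hp hpdvd t
  have hp3 : p = 3 := (Nat.prime_dvd_prime_iff_eq hp (by norm_num)).1 (hp.dvd_of_dvd_pow hpdvd)
  subst hp3
  exact no_cube_root _ hk3 t

end NotAPaux



set_option maxHeartbeats 1000000 in
theorem example_monoid_not_AP
    (M : AddSubmonoid ℚ)
    (hMdef : M = AddSubmonoid.closure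
      ({q : ℚ | ∃ i : ℕ, 1 ≤ i ∧ q = 1 / 2 ^ i} ∪
       {q : ℚ | ∃ j : ℕ, 1 ≤ j ∧ q = 1 / 3 ^ j}))
    (F : Type*) [Field F] [CharZero F] :
    ∃ x : AddMonoidAlgebra F M, Irreducible x ∧ ¬ Prime x := by
  classical
  subst hMdef
  haveI : Nontrivial (AddMonoidAlgebra F ℚ) := inferInstance
  set M : AddSubmonoid ℚ := AddSubmonoid.closure NotAPaux.genSet with hM
  -- memberships
  have h13 : (1/3 : ℚ) ∈ M := AddSubmonoid.subset_closure (by exact Or.inr ⟨1, le_refl 1, by norm_num⟩)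
  have h12 : (1/2 : ℚ) ∈ M := AddSubmonoid.subset_closure (by exact Or.inl ⟨1, le_refl 1, by norm_num⟩)
  have h23 : (2/3 : ℚ) ∈ M := by
    have := M.add_mem h13 h13; norm_num at this; exact this
  have h1 : (1 : ℚ) ∈ M := by
    have := M.add_mem h12 h12; norm_num at this; exact this
  -- the elements
  set e13 : M := ⟨1/3, h13⟩
  set e12 : M := ⟨1/2, h12⟩
  set e23 : M := ⟨2/3, h23⟩
  set e1 : M := ⟨1, h1⟩
  set x : AddMonoidAlgebra F M := AddMonoidAlgebra.single e13 (1:F) + AddMonoidAlgebra.single e12 1 with hxdef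
  set ι : AddMonoidAlgebra F M →+* AddMonoidAlgebra F ℚ :=
    AddMonoidAlgebra.mapDomainRingHom F M.subtype with hιdef
  have hι_single : ∀ (m : M) (c : F), ι (AddMonoidAlgebra.single m c) = AddMonoidAlgebra.single (m : ℚ) c := by
    intro m c
    simp [hιdef, AddMonoidAlgebra.mapDomain_single]
  have hι_inj : Function.Injective ι := by
    have : Function.Injective (⇑M.subtype) := Subtype.coe_injective
    exact AddMonoidAlgebra.mapDomain_injective (R := F) this
  set f' : AddMonoidAlgebra F ℚ :=
    AddMonoidAlgebra.single (1/3 : ℚ) (1:F) + AddMonoidAlgebra.single (1/2 : ℚ) 1 with hf'def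
  have hx : ι x = f' := by rw [hxdef, map_add, hι_single, hι_single]
  have hsupp : f'.coeff.support = {(1/3 : ℚ), (1/2 : ℚ)} := by
    rw [hf'def, AddMonoidAlgebra.coeff_add, AddMonoidAlgebra.coeff_single,
      AddMonoidAlgebra.coeff_single, Finsupp.support_add_eq, Finsupp.support_single_ne_zero _ one_ne_zero,
      Finsupp.support_single_ne_zero _ one_ne_zero]
    · rfl
    · rw [Finsupp.support_single_ne_zero _ one_ne_zero,
        Finsupp.support_single_ne_zero _ one_ne_zero]
      simp
  have hf'ne : f'.coeff.support.Nonempty := by rw [hsupp]; exact ⟨1/2, by simp⟩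
  have hmaxf : f'.coeff.support.max' hf'ne = 1/2 := by
    obtain ⟨mF, hmF⟩ : ∃ v, f'.coeff.support.max' hf'ne = v := ⟨_, rfl⟩
    have h1' : mF ∈ f'.coeff.support := hmF ▸ Finset.max'_mem _ _
    rw [hsupp] at h1'
    have h2' : (1/2:ℚ) ≤ mF := hmF ▸ Finset.le_max' _ _ (by rw [hsupp]; simp)
    rw [hmF]
    rcases Finset.mem_insert.1 h1' with h | h
    · rw [h] at h2'; norm_num at h2'
    · exact Finset.mem_singleton.1 h
  have hminf : f'.coeff.support.min' hf'ne = 1/3 := by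
    obtain ⟨mF, hmF⟩ : ∃ v, f'.coeff.support.min' hf'ne = v := ⟨_, rfl⟩
    have h1' : mF ∈ f'.coeff.support := hmF ▸ Finset.min'_mem _ _
    rw [hsupp] at h1'
    have h2' : mF ≤ (1/3:ℚ) := hmF ▸ Finset.min'_le _ _ (by rw [hsupp]; simp)
    rw [hmF]
    rcases Finset.mem_insert.1 h1' with h | h
    · exact h
    · rw [Finset.mem_singleton.1 h] at h2'; norm_num at h2'
  -- support of images lies in M
  have hsuppM : ∀ (w : AddMonoidAlgebra F M) (v : ℚ), v ∈ (ι w).coeff.support → v ∈ M := by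
    intro w v hv
    have hsub := Finsupp.mapDomain_support (f := ⇑M.subtype) (s := w.coeff)
    have : v ∈ Finset.image (⇑M.subtype) w.coeff.support := by
      apply hsub
      simpa [hιdef] using hv
    obtain ⟨m, _, rfl⟩ := Finset.mem_image.1 this
    exact m.2
  have hsuppM' : ∀ (w : AddMonoidAlgebra F M) (v : ℚ), v ∈ (ι w).coeff.support → 0 ≤ v :=
    fun w v hv => NotAPaux.mem_nonneg (hsuppM w v hv)
  -- x is not a unit
  have hxnotunit : ¬ IsUnit x := by
    intro hu
    obtain ⟨w, hw⟩ := isUnit_iff_exists_inv.1 hu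
    have h1u : f' * ι w = 1 := by rw [← hx, ← map_mul, hw, map_one]
    have hw0 : (ι w).coeff.support.Nonempty := by
      rw [Finsupp.support_nonempty_iff, Ne, AddMonoidAlgebra.coeff_eq_zero]
      intro h0
      rw [h0, mul_zero] at h1u
      exact one_ne_zero h1u.symm
    have hmem := NotAPaux.max'_add_mem f' (ι w) hf'ne hw0
    rw [h1u] at hmem
    have hone : (1 : AddMonoidAlgebra F ℚ).coeff.support = {0} := by
      rw [AddMonoidAlgebra.one_def]
      exact Finsupp.support_single_ne_zero _ one_ne_zero
    rw [hone, Finset.mem_singleton] at hmem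
    have hposw : 0 ≤ (ι w).coeff.support.max' hw0 :=
      hsuppM' w _ (Finset.max'_mem _ _)
    rw [hmaxf] at hmem
    linarith
  -- elements for the non-primality
  set P : AddMonoidAlgebra F M := AddMonoidAlgebra.single e23 (1:F) with hPdef
  set Q : AddMonoidAlgebra F M := 1 - AddMonoidAlgebra.single e13 (1:F) with hQdef
  set w₀ : AddMonoidAlgebra F M :=
    AddMonoidAlgebra.single e13 (1:F) - AddMonoidAlgebra.single e12 1 with hw₀def
  have hsum1313 : e13 + e13 = e23 := by ext; norm_num
  have hsum1212 : e12 + e12 = e1 := by ext; norm_num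
  have hsum2313 : e23 + e13 = e1 := by ext; norm_num
  have hxw : x * w₀ = P * Q := by
    have hL : x * w₀ = AddMonoidAlgebra.single e13 (1:F) * AddMonoidAlgebra.single e13 1
        - AddMonoidAlgebra.single e12 (1:F) * AddMonoidAlgebra.single e12 1 := by
      rw [hxdef, hw₀def]; ring
    have hR : P * Q = AddMonoidAlgebra.single e23 (1:F)
        - AddMonoidAlgebra.single e23 (1:F) * AddMonoidAlgebra.single e13 1 := by
      rw [hPdef, hQdef]; ring
    rw [hL, hR, AddMonoidAlgebra.single_mul_single, AddMonoidAlgebra.single_mul_single,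
      AddMonoidAlgebra.single_mul_single, hsum1313, hsum1212, hsum2313, mul_one]
    -- goal: single e23 1 - single e1 1 = single e23 1 - single e1 1
  have hdvd : x ∣ P * Q := ⟨w₀, hxw.symm⟩
  have hndvdP : ¬ x ∣ P := by
    rintro ⟨w, hw⟩
    have h1u : f' * ι w = AddMonoidAlgebra.single (2/3 : ℚ) 1 := by
      rw [← hx, ← map_mul, ← hw, hPdef, hι_single]
    have hw0 : (ι w).coeff.support.Nonempty := by
      rw [Finsupp.support_nonempty_iff, Ne, AddMonoidAlgebra.coeff_eq_zero]
      intro h0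
      rw [h0, mul_zero] at h1u
      exact one_ne_zero (AddMonoidAlgebra.single_eq_zero.1 h1u.symm)
    have hsupP : (AddMonoidAlgebra.single (2/3 : ℚ) (1:F)).coeff.support = {(2/3 : ℚ)} :=
      Finsupp.support_single_ne_zero _ one_ne_zero
    have hmem1 := NotAPaux.max'_add_mem f' (ι w) hf'ne hw0
    have hmem2 := NotAPaux.min'_add_mem f' (ι w) hf'ne hw0
    rw [h1u, hsupP, Finset.mem_singleton] at hmem1 hmem2
    rw [hmaxf] at hmem1
    rw [hminf] at hmem2
    have hminmax : (ι w).coeff.support.min' hw0 ≤ (ι w).coeff.support.max' hw0 :=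
      Finset.min'_le _ _ (Finset.max'_mem _ _)
    linarith
  have hndvdQ : ¬ x ∣ Q := by
    rintro ⟨w, hw⟩
    have h1u : f' * ι w = 1 - AddMonoidAlgebra.single (1/3 : ℚ) 1 := by
      rw [← hx, ← map_mul, ← hw, hQdef, map_sub, map_one, hι_single]
    have happ : (f' * ι w).coeff 0 = 1 := by
      rw [h1u, AddMonoidAlgebra.coeff_sub, Finsupp.sub_apply, AddMonoidAlgebra.one_def,
        AddMonoidAlgebra.coeff_single, AddMonoidAlgebra.coeff_single,
        Finsupp.single_apply, Finsupp.single_apply]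
      norm_num
    have h0mem : (0:ℚ) ∈ (f' * ι w).coeff.support := Finsupp.mem_support_iff.2 (by rw [happ]; exact one_ne_zero)
    have := AddMonoidAlgebra.support_coeff_mul_subset f' (ι w) h0mem
    obtain ⟨u, hu, v, hv, huv⟩ := Finset.mem_add.1 this
    rw [hsupp] at hu
    have hv0 : 0 ≤ v := hsuppM' w v hv
    rcases Finset.mem_insert.1 hu with h | h
    · rw [h] at huv; linarith
    · rw [Finset.mem_singleton.1 h] at huv; linarith
  have hnprime : ¬ Prime x := by
    intro hpr
    rcases hpr.2.2 P Q hdvd with h | h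
    · exact hndvdP h
    · exact hndvdQ h
  have hf'0 : f' ≠ 0 := by
    intro h0
    rw [h0] at hsupp
    exact absurd hsupp.symm (by simp)
  refine ⟨x, ⟨hxnotunit, ?_⟩, hnprime⟩
  intro g h hgh
  have hpq : ι g * ι h = f' := by rw [← map_mul, ← hgh, hx]
  have hpne : (ι g).coeff.support.Nonempty := by
    rw [Finsupp.support_nonempty_iff, Ne, AddMonoidAlgebra.coeff_eq_zero]
    intro h0; rw [h0, zero_mul] at hpq
    exact hf'0 hpq.symm
  have hqne : (ι h).coeff.support.Nonempty := by
    rw [Finsupp.support_nonempty_iff, Ne, AddMonoidAlgebra.coeff_eq_zero]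
    intro h0; rw [h0, mul_zero] at hpq
    exact hf'0 hpq.symm
  obtain ⟨Mp, hMp⟩ : ∃ v, (ι g).coeff.support.max' hpne = v := ⟨_, rfl⟩
  obtain ⟨Mq, hMq⟩ : ∃ v, (ι h).coeff.support.max' hqne = v := ⟨_, rfl⟩
  have hMp0 : 0 ≤ Mp := hMp ▸ hsuppM' g _ (Finset.max'_mem _ _)
  have hMq0 : 0 ≤ Mq := hMq ▸ hsuppM' h _ (Finset.max'_mem _ _)
  have hMple : ∀ u ∈ (ι g).coeff.support, u ≤ Mp := fun u hu => hMp ▸ Finset.le_max' _ _ hu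
  have hMqle : ∀ v ∈ (ι h).coeff.support, v ≤ Mq := fun v hv => hMq ▸ Finset.le_max' _ _ hv
  have hMpq : Mp + Mq = 1/2 := by
    have hmem := NotAPaux.max'_add_mem (ι g) (ι h) hpne hqne
    rw [hpq, hMp, hMq, hsupp] at hmem
    have h12mem' : (1/2 : ℚ) ∈ (ι g * ι h).coeff.support := by
      rw [hpq, hsupp]; simp
    have h12mem := AddMonoidAlgebra.support_coeff_mul_subset (ι g) (ι h) h12mem'
    obtain ⟨u, hu, v, hv, huv⟩ := Finset.mem_add.1 h12mem
    have hle : (1/2:ℚ) ≤ Mp + Mq := by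
      have h1 := hMple u hu
      have h2 := hMqle v hv
      linarith [huv]
    rcases Finset.mem_insert.1 hmem with hh | hh
    · rw [hh] at hle; norm_num at hle
    · exact Finset.mem_singleton.1 hh
  -- uniform representation of exponents
  obtain ⟨a, b, ha, hb, hrep⟩ := NotAPaux.finset_rep ((ι g).coeff.support ∪ (ι h).coeff.support)
    (by intro u hu
        rcases Finset.mem_union.1 hu with hu' | hu'
        · exact hsuppM g u hu'
        · exact hsuppM h u hu')
  set χ : ℚ → ℕ × ℕ := fun u =>
    if hh : ∃ z : ℕ × ℕ, u = (z.1 : ℚ)/2^a + (z.2 : ℚ)/3^b then hh.choose else (0,0) with hχdef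
  have hχ : ∀ u ∈ (ι g).coeff.support ∪ (ι h).coeff.support,
      u = ((χ u).1 : ℚ)/2^a + ((χ u).2 : ℚ)/3^b := by
    intro u hu
    obtain ⟨xx, yy, hxy⟩ := hrep u hu
    have hex : ∃ z : ℕ × ℕ, u = (z.1 : ℚ)/2^a + (z.2 : ℚ)/3^b := ⟨(xx,yy), hxy⟩
    have : χ u = hex.choose := by rw [hχdef]; exact dif_pos hex
    rw [this]
    exact hex.choose_spec
  set ρ : ℕ × ℕ →+ ℚ := AddMonoidHom.mk' (fun z => (z.1 : ℚ)/2^a + (z.2 : ℚ)/3^b)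
    (by intro z w; simp only [Prod.fst_add, Prod.snd_add]; push_cast; ring) with hρdef
  have hρ : ∀ z : ℕ × ℕ, ρ z = (z.1 : ℚ)/2^a + (z.2 : ℚ)/3^b := fun z => rfl
  set Φ : AddMonoidAlgebra F (ℕ × ℕ) →+* AddMonoidAlgebra F ℚ :=
    AddMonoidAlgebra.mapDomainRingHom F ρ with hΦdef
  have hΦsingle : ∀ (z : ℕ × ℕ) (c : F),
      Φ (AddMonoidAlgebra.single z c) = AddMonoidAlgebra.single (ρ z) c := by
    intro z c; simp [hΦdef, AddMonoidAlgebra.mapDomain_single]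
  set G₂ : AddMonoidAlgebra F (ℕ × ℕ) :=
    ∑ u ∈ (ι g).coeff.support, AddMonoidAlgebra.single (χ u) ((ι g).coeff u) with hG₂
  set H₂ : AddMonoidAlgebra F (ℕ × ℕ) :=
    ∑ u ∈ (ι h).coeff.support, AddMonoidAlgebra.single (χ u) ((ι h).coeff u) with hH₂
  have hρχ : ∀ u ∈ (ι g).coeff.support ∪ (ι h).coeff.support, ρ (χ u) = u :=
    fun u hu => by rw [hρ]; exact (hχ u hu).symm
  have hΦG : Φ G₂ = ι g := by
    rw [hG₂, map_sum]
    rw [Finset.sum_congr rfl (fun u hu => by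
      rw [hΦsingle, hρχ u (Finset.mem_union_left _ hu)])]
    exact AddMonoidAlgebra.sum_coeff_single (ι g)
  have hΦH : Φ H₂ = ι h := by
    rw [hH₂, map_sum]
    rw [Finset.sum_congr rfl (fun u hu => by
      rw [hΦsingle, hρχ u (Finset.mem_union_right _ hu)])]
    exact AddMonoidAlgebra.sum_coeff_single (ι h)
  have hsuppG₂ : ∀ z ∈ G₂.coeff.support, ρ z ≤ Mp := by
    intro z hz
    rw [hG₂, AddMonoidAlgebra.coeff_sum] at hz
    have hz' := Finsupp.support_finset_sum hz
    obtain ⟨u, hu, hzu⟩ := Finset.mem_biUnion.1 hz'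
    have : z = χ u := Finset.mem_singleton.1 (Finsupp.support_single_subset hzu)
    rw [this, hρχ u (Finset.mem_union_left _ hu)]
    exact hMple u hu
  have hsuppH₂ : ∀ z ∈ H₂.coeff.support, ρ z ≤ Mq := by
    intro z hz
    rw [hH₂, AddMonoidAlgebra.coeff_sum] at hz
    have hz' := Finsupp.support_finset_sum hz
    obtain ⟨u, hu, hzu⟩ := Finset.mem_biUnion.1 hz'
    have : z = χ u := Finset.mem_singleton.1 (Finsupp.support_single_subset hzu)
    rw [this, hρχ u (Finset.mem_union_right _ hu)]
    exact hMqle u hu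
  have h2a : (0:ℚ) < 2^a := by positivity
  have h3b : (0:ℚ) < 3^b := by positivity
  have hSinj : Set.InjOn ρ {z : ℕ × ℕ | ρ z ≤ 1/2} := by
    intro z hz w hw hzw
    simp only [Set.mem_setOf_eq] at hz hw
    rw [hρ z] at hz
    rw [hρ w] at hw
    have hz2nn : (0:ℚ) ≤ (z.2 : ℚ)/3^b := by positivity
    have hz1nn : (0:ℚ) ≤ (z.1 : ℚ)/2^a := by positivity
    have hw2nn : (0:ℚ) ≤ (w.2 : ℚ)/3^b := by positivity
    have hw1nn : (0:ℚ) ≤ (w.1 : ℚ)/2^a := by positivity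
    have key1 : ∀ n : ℕ, ((n : ℚ)/2^a ≤ 1/2) → n < 2^a := by
      intro n hn
      by_contra hcon
      push_neg at hcon
      have hc : (2^a : ℚ) ≤ (n : ℚ) := by exact_mod_cast hcon
      rw [div_le_iff₀ h2a] at hn
      linarith
    have key2 : ∀ n : ℕ, ((n : ℚ)/3^b ≤ 1/2) → n < 3^b := by
      intro n hn
      by_contra hcon
      push_neg at hcon
      have hc : (3^b : ℚ) ≤ (n : ℚ) := by exact_mod_cast hcon
      rw [div_le_iff₀ h3b] at hn
      linarith
    have hz1nn' : (0:ℚ) ≤ (z.1 : ℚ)/2^a := by positivity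
    have hw1nn' : (0:ℚ) ≤ (w.1 : ℚ)/2^a := by positivity
    have hzw' : (z.1 : ℚ)/2^a + (z.2 : ℚ)/3^b = (w.1 : ℚ)/2^a + (w.2 : ℚ)/3^b := by
      rw [← hρ z, ← hρ w, hzw]
    obtain ⟨hh1, hh2⟩ := NotAPaux.rho_inj
      (key1 z.1 (by linarith)) (key1 w.1 (by linarith))
      (key2 z.2 (by linarith)) (key2 w.2 (by linarith)) hzw'
    exact Prod.ext hh1 hh2
  have hGHsupp : ↑(G₂ * H₂).coeff.support ⊆ {z : ℕ × ℕ | ρ z ≤ 1/2} := by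
    intro z hz
    have hz' := AddMonoidAlgebra.support_coeff_mul_subset G₂ H₂ hz
    obtain ⟨u, hu, v, hv, huv⟩ := Finset.mem_add.1 hz'
    have h1' := hsuppG₂ u hu
    have h2' := hsuppH₂ v hv
    simp only [Set.mem_setOf_eq]
    rw [← huv, map_add]
    linarith
  set P₀ : AddMonoidAlgebra F (ℕ × ℕ) :=
    AddMonoidAlgebra.single ((2^(a-1), 0) : ℕ × ℕ) (1:F)
      + AddMonoidAlgebra.single ((0, 3^(b-1)) : ℕ × ℕ) 1 with hP₀
  have hρk : ρ ((2^(a-1), 0) : ℕ × ℕ) = 1/2 := by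
    rw [hρ]
    have hpow : (2:ℚ)^a = 2^(a-1) * 2 := by
      rw [← pow_succ]; congr 1; omega
    have h2' : (2:ℚ)^(a-1) ≠ 0 := by positivity
    push_cast
    rw [hpow, div_mul_cancel_left₀ h2']
    norm_num
  have hρm : ρ ((0, 3^(b-1)) : ℕ × ℕ) = 1/3 := by
    rw [hρ]
    have hpow : (3:ℚ)^b = 3^(b-1) * 3 := by
      rw [← pow_succ]; congr 1; omega
    have h3' : (3:ℚ)^(b-1) ≠ 0 := by positivity
    push_cast
    rw [hpow, div_mul_cancel_left₀ h3']
    norm_num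
  have hP₀supp : ↑P₀.coeff.support ⊆ {z : ℕ × ℕ | ρ z ≤ 1/2} := by
    intro z hz
    rw [hP₀, AddMonoidAlgebra.coeff_add] at hz
    have hz' := Finsupp.support_add hz
    simp only [Set.mem_setOf_eq]
    rcases Finset.mem_union.1 hz' with hz'' | hz''
    · have := Finset.mem_singleton.1 (Finsupp.support_single_subset hz'')
      rw [this, hρk]
    · have := Finset.mem_singleton.1 (Finsupp.support_single_subset hz'')
      rw [this, hρm]
      norm_num
  have hΦP₀ : Φ P₀ = f' := by
    rw [hP₀, map_add, hΦsingle, hΦsingle, hρk, hρm, hf'def, add_comm]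
  have hGH : G₂ * H₂ = P₀ := by
    have hΦeq : Φ (G₂ * H₂) = Φ P₀ := by rw [map_mul, hΦG, hΦH, hpq, hΦP₀]
    have hmd : Finsupp.mapDomain ⇑ρ (G₂ * H₂).coeff = Finsupp.mapDomain ⇑ρ P₀.coeff :=
      congrArg AddMonoidAlgebra.coeff hΦeq
    exact AddMonoidAlgebra.coeff_injective (Finsupp.mapDomain_injOn _ hSinj hGHsupp hP₀supp hmd)
  -- pass to polynomials
  have hThetaP₀ : NotAPaux.Theta F P₀
      = (Polynomial.X : Polynomial (Polynomial F)) ^ (3^(b-1))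
        + Polynomial.C ((Polynomial.X : Polynomial F) ^ (2^(a-1))) := by
    rw [hP₀, map_add, NotAPaux.Theta_single, NotAPaux.Theta_single]
    simp only [one_smul, pow_zero, mul_one, one_mul, ← Polynomial.C_pow]
    exact add_comm _ _
  have hTheta : (Polynomial.X : Polynomial (Polynomial F)) ^ (3^(b-1))
      + Polynomial.C ((Polynomial.X : Polynomial F) ^ (2^(a-1)))
      = NotAPaux.Theta F G₂ * NotAPaux.Theta F H₂ := by
    rw [← map_mul, hGH, hThetaP₀]
  -- a unit conclusion transfer
  have keyUnit : ∀ (g' : AddMonoidAlgebra F M) (Pm : AddMonoidAlgebra F (ℕ × ℕ)),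
      Φ Pm = ι g' → IsUnit (NotAPaux.Theta F Pm) → IsUnit g' := by
    intro g' Pm hΦPm hun
    obtain ⟨r, hr, hCr⟩ := Polynomial.isUnit_iff.1 hun
    obtain ⟨c, hc, hCc⟩ := Polynomial.isUnit_iff.1 hr
    have hsmul : c • (1 : Polynomial (Polynomial F)) = Polynomial.C (Polynomial.C c) := by
      rw [← Polynomial.C_1, Polynomial.smul_C, ← Polynomial.C_1, Polynomial.smul_C,
        smul_eq_mul, mul_one]
    have hTheta0 : NotAPaux.Theta F Pm
        = NotAPaux.Theta F (AddMonoidAlgebra.single ((0,0) : ℕ × ℕ) c) := by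
      rw [NotAPaux.Theta_single, ← hCr, ← hCc]
      simp only [pow_zero, mul_one, hsmul]
    have hPm : Pm = AddMonoidAlgebra.single ((0,0) : ℕ × ℕ) c :=
      NotAPaux.Theta_injective hTheta0
    rw [hPm, hΦsingle] at hΦPm
    have hρ0 : ρ ((0,0) : ℕ × ℕ) = 0 := by rw [hρ]; norm_num
    rw [hρ0] at hΦPm
    have hg' : g' = AddMonoidAlgebra.single (0 : M) c := by
      apply hι_inj
      rw [← hΦPm, hι_single]
      rfl
    rw [hg']
    refine IsUnit.of_mul_eq_one (AddMonoidAlgebra.single (0 : M) c⁻¹) ?_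
    rw [AddMonoidAlgebra.single_mul_single, add_zero, mul_inv_cancel₀ hc.ne_zero,
      AddMonoidAlgebra.one_def]
  have hirr := NotAPaux.irred_key (F := F) a b ha hb
  rcases hirr.isUnit_or_isUnit hTheta with hun | hun
  · exact Or.inl (keyUnit g G₂ hΦG hun)
  · exact Or.inr (keyUnit h H₂ hΦH hun)
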